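/- The number of binary words of length mn, partitioned into m blocks of length n each of weight exactly w, lying at Hamming distance at most 2(D-1) from a fixed such word, is at most Σ_{i₁+⋯+i_m ≤ D-1} ∏_{j=1}^m C(w,i_j)·C(n-w,i_j). Consequently, M(m,n,2D,w) ≥ C(n,w)^m / Σ_{i₁+⋯+i_m ≤ D-1} ∏_{j=1}^m C(w,i_j)·C(n-w,i_j). -/

import Mathlib

open Finset

namespace GVmcwc

variable {n : ℕ}

/-- support of a boolean word -/
def spt (f : Fin n → Bool) : Finset (Fin n) := univ.filter fun i => f i = true

lemma hd_eq (f g : Fin n → Bool) :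
    hammingDist f g = (spt f \ spt g).card + (spt g \ spt f).card := by
  have h : (univ.filter fun i => f i ≠ g i) = (spt f \ spt g) ∪ (spt g \ spt f) := by
    ext i
    simp only [mem_filter, mem_univ, true_and, mem_union, mem_sdiff, spt]
    cases hf : f i <;> cases hg : g i <;> simp
  have : hammingDist f g = (univ.filter fun i => f i ≠ g i).card := rfl
  rw [this, h, card_union_of_disjoint (disjoint_sdiff_sdiff)]

lemma sdiff_cards {f g : Fin n → Bool} {w : ℕ} (hf : (spt f).card = w)
    (hg : (spt g).card = w) :
    (spt f \ spt g).card = (spt g \ spt f).card := by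
  have h1 := card_sdiff_add_card_inter (spt f) (spt g)
  have h2 := card_sdiff_add_card_inter (spt g) (spt f)
  rw [inter_comm] at h2
  omega

lemma even_hd {f g : Fin n → Bool} {w : ℕ} (hf : (spt f).card = w)
    (hg : (spt g).card = w) : Even (hammingDist f g) := by
  rw [hd_eq, sdiff_cards hf hg]
  exact ⟨_, rfl⟩

lemma spt_inj {f g : Fin n → Bool} (h : spt f = spt g) : f = g := by
  funext x
  have : x ∈ spt f ↔ x ∈ spt g := by rw [h]
  simp only [spt, mem_filter, mem_univ, true_and] at this
  exact Bool.eq_iff_iff.2 this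

/-- number of weight-w words at distance exactly 2i from a fixed weight-w word -/
lemma block_count (w i : ℕ) (g : Fin n → Bool) (hg : (spt g).card = w) :
    (univ.filter fun f : Fin n → Bool =>
        (spt f).card = w ∧ hammingDist f g = 2 * i).card
      ≤ Nat.choose w i * Nat.choose (n - w) i := by
  have hcard : (powersetCard i (spt g) ×ˢ powersetCard i (spt g)ᶜ).card
      = Nat.choose w i * Nat.choose (n - w) i := by
    rw [card_product, card_powersetCard, card_powersetCard, hg, card_compl, hg,
      Fintype.card_fin]
  rw [← hcard]
  apply card_le_card_of_injOn (fun f => (spt g \ spt f, spt f \ spt g))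
  · intro f hf
    simp only [mem_coe, mem_filter, mem_univ, true_and] at hf
    obtain ⟨hfw, hfd⟩ := hf
    have heq := sdiff_cards hfw hg
    have hsum : (spt f \ spt g).card + (spt g \ spt f).card = 2 * i := by
      rw [← hd_eq]; exact hfd
    have h1 : (spt g \ spt f).card = i := by omega
    have h2 : (spt f \ spt g).card = i := by omega
    rw [mem_coe, mem_product, mem_powersetCard, mem_powersetCard]
    refine ⟨⟨sdiff_subset, h1⟩, ?_, h2⟩
    intro x hx
    simp only [mem_sdiff] at hx
    simp only [mem_compl]
    exact hx.2
  · intro f₁ h₁ f₂ h₂ hpair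
    simp only [Prod.mk.injEq] at hpair
    apply spt_inj
    have e1 : spt g \ spt f₁ = spt g \ spt f₂ := hpair.1
    have e2 : spt f₁ \ spt g = spt f₂ \ spt g := hpair.2
    have key : ∀ f : Fin n → Bool, spt f = (spt g \ (spt g \ spt f)) ∪ (spt f \ spt g) := by
      intro f
      rw [sdiff_sdiff_self_left, inter_comm]
      ext x; simp only [mem_union, mem_inter, mem_sdiff]; tauto
    rw [key f₁, key f₂, e1, e2]

/-- the number of weight-w words of length n is `C(n,w)` -/
lemma count_wt (w : ℕ) :
    (univ.filter fun f : Fin n → Bool => (spt f).card = w).card = Nat.choose n w := by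
  rw [show Nat.choose n w = (powersetCard w (univ : Finset (Fin n))).card by
    rw [card_powersetCard, card_univ, Fintype.card_fin]]
  apply card_bij (fun f _ => spt f)
  · intro f hf
    simp only [mem_filter, mem_univ, true_and] at hf
    rw [mem_powersetCard]
    exact ⟨subset_univ _, hf⟩
  · intro f₁ h₁ f₂ h₂ h
    exact spt_inj h
  · intro A hA
    rw [mem_powersetCard] at hA
    refine ⟨fun x => decide (x ∈ A), ?_, ?_⟩
    · simp only [mem_filter, mem_univ, true_and]
      have : spt (fun x => decide (x ∈ A)) = A := by
        ext x; simp [spt]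
      rw [this]; exact hA.2
    · ext x; simp [spt]

variable {m : ℕ}

lemma hd_prod (c c' : Fin m × Fin n → Bool) :
    hammingDist c c' = ∑ j : Fin m, hammingDist (fun i => c (j, i)) (fun i => c' (j, i)) := by
  have h : ∀ (a b : Fin m × Fin n → Bool), hammingDist a b
      = (univ.filter fun x : Fin m × Fin n => a x ≠ b x).card := fun _ _ => rfl
  rw [h]
  rw [card_filter]
  rw [Fintype.sum_prod_type]
  congr 1
  funext j
  rw [show hammingDist (fun i => c (j, i)) (fun i => c' (j, i))
    = (univ.filter fun i : Fin n => c (j, i) ≠ c' (j, i)).card from rfl, card_filter]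


lemma ball_bound (m n w D : ℕ) (hD : 0 < D) (c₀ : Fin m × Fin n → Bool)
    (hc₀ : ∀ j : Fin m, (univ.filter (fun i : Fin n => c₀ (j, i) = true)).card = w) :
    (univ.filter (fun c : Fin m × Fin n → Bool =>
        (∀ j : Fin m, (univ.filter (fun i : Fin n => c (j, i) = true)).card = w) ∧
        hammingDist c c₀ ≤ 2 * (D - 1))).card
      ≤ ∑ t ∈ univ.filter (fun t : Fin m → Fin D => (∑ j, (t j : ℕ)) ≤ D - 1),
          ∏ j, Nat.choose w (t j) * Nat.choose (n - w) (t j) := by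
  classical
  set Ball := univ.filter (fun c : Fin m × Fin n → Bool =>
        (∀ j : Fin m, (univ.filter (fun i : Fin n => c (j, i) = true)).card = w) ∧
        hammingDist c c₀ ≤ 2 * (D - 1)) with hBall
  set d : (Fin m × Fin n → Bool) → Fin m → ℕ :=
    fun c j => hammingDist (fun i => c (j, i)) (fun i => c₀ (j, i)) with hd
  set Φ : (Fin m × Fin n → Bool) → (Fin m → Fin D) :=
    fun c j => ⟨min (d c j / 2) (D - 1), by omega⟩ with hΦ
  set T := univ.filter (fun t : Fin m → Fin D => (∑ j, (t j : ℕ)) ≤ D - 1) with hT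
  -- facts for c in Ball
  have hkey : ∀ c ∈ Ball, (∀ j, Even (d c j)) ∧ (∀ j, d c j ≤ 2 * (D - 1)) := by
    intro c hc
    rw [hBall, mem_filter] at hc
    obtain ⟨-, hcw, hcd⟩ := hc
    rw [hd_prod] at hcd
    constructor
    · intro j
      exact even_hd (w := w) (hcw j) (hc₀ j)
    · intro j
      exact le_trans (single_le_sum (fun i _ => Nat.zero_le _) (mem_univ j)) hcd
  have hmaps : ∀ c ∈ Ball, Φ c ∈ T := by
    intro c hc
    obtain ⟨heven, hle⟩ := hkey c hc
    have hcd : ∑ j, d c j ≤ 2 * (D - 1) := by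
      rw [hBall, mem_filter] at hc
      have := hc.2.2
      rwa [hd_prod] at this
    rw [hT, mem_filter]
    refine ⟨mem_univ _, ?_⟩
    have hval : ∀ j, ((Φ c j : ℕ)) = d c j / 2 := by
      intro j
      simp only [hΦ]
      exact min_eq_left (by have := hle j; omega)
    have h2 : 2 * ∑ j, (d c j / 2) = ∑ j, d c j := by
      rw [Finset.mul_sum]
      apply Finset.sum_congr rfl
      intro j _
      obtain ⟨k, hk⟩ := heven j
      omega
    calc ∑ j, ((Φ c j : ℕ)) = ∑ j, (d c j / 2) := Finset.sum_congr rfl (fun j _ => hval j)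
      _ ≤ D - 1 := by omega
  rw [card_eq_sum_card_fiberwise hmaps]
  apply Finset.sum_le_sum
  intro t _
  -- bound fiber
  have hfib : ∀ c ∈ Ball.filter (fun c => Φ c = t), ∀ j, d c j = 2 * (t j : ℕ) := by
    intro c hc j
    rw [mem_filter] at hc
    obtain ⟨hcB, hct⟩ := hc
    obtain ⟨heven, hle⟩ := hkey c hcB
    have : ((Φ c j : ℕ)) = (t j : ℕ) := by rw [hct]
    simp only [hΦ] at this
    rw [min_eq_left (by have := hle j; omega)] at this
    obtain ⟨k, hk⟩ := heven j
    omega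
  have hprod : (Fintype.piFinset (fun j : Fin m => univ.filter fun f : Fin n → Bool =>
      (spt f).card = w ∧ hammingDist f (fun i => c₀ (j, i)) = 2 * (t j : ℕ))).card
      ≤ ∏ j, Nat.choose w (t j : ℕ) * Nat.choose (n - w) (t j : ℕ) := by
    rw [Fintype.card_piFinset]
    apply Finset.prod_le_prod'
    intro j _
    exact block_count w (t j : ℕ) _ (hc₀ j)
  refine le_trans ?_ hprod
  apply card_le_card_of_injOn (fun c => fun j i => c (j, i))
  · intro c hc
    have hmem := hc
    rw [mem_coe, mem_filter, hBall, mem_filter] at hmem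
    obtain ⟨⟨-, hcw, -⟩, -⟩ := hmem
    rw [mem_coe, Fintype.mem_piFinset]
    intro j
    rw [mem_filter]
    exact ⟨mem_univ _, hcw j, hfib c hc j⟩
  · intro c₁ _ c₂ _ h
    funext x
    have := congrFun (congrFun h x.1) x.2
    simpa using this

lemma total_count (m n w : ℕ) :
    (univ.filter fun c : Fin m × Fin n → Bool =>
       ∀ j : Fin m, (univ.filter (fun i : Fin n => c (j, i) = true)).card = w).card
      = Nat.choose n w ^ m := by
  classical
  have : Nat.choose n w ^ m = (Fintype.piFinset (fun _ : Fin m =>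
      univ.filter fun f : Fin n → Bool => (spt f).card = w)).card := by
    rw [Fintype.card_piFinset]
    simp [count_wt, Finset.prod_const]
  rw [this]
  apply card_bij (fun c _ => fun j i => c (j, i))
  · intro c hc
    rw [mem_filter] at hc
    rw [Fintype.mem_piFinset]
    intro j
    rw [mem_filter]
    exact ⟨mem_univ _, hc.2 j⟩
  · intro c₁ _ c₂ _ h
    funext x
    have := congrFun (congrFun h x.1) x.2
    simpa using this
  · intro F hF
    rw [Fintype.mem_piFinset] at hF
    refine ⟨fun p => F p.1 p.2, ?_, rfl⟩
    rw [mem_filter]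
    refine ⟨mem_univ _, fun j => ?_⟩
    have := hF j
    rw [mem_filter] at this
    exact this.2

end GVmcwc


/-- Maximum size of a multiply constant-weight code `MCWC(m,n,d,w)`. -/
noncomputable def Mmcwc (m n d w : ℕ) : ℕ :=
  sSup {k | ∃ C : Finset (Fin m × Fin n → Bool),
    (∀ c ∈ C, ∀ j : Fin m, (univ.filter fun i : Fin n => c (j, i) = true).card = w) ∧
    (∀ u ∈ C, ∀ v ∈ C, u ≠ v → d ≤ hammingDist u v) ∧ C.card = k}

/-- Gilbert–Varshamov bound for multiply constant-weight codes: the Hamming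
ball of radius `2(D-1)` around a word with all block weights `w` contains at
most `∑_{i₁+⋯+i_m ≤ D-1} ∏_j C(w,i_j)·C(n-w,i_j)` such words, and consequently
`M(m,n,2D,w) · (that sum) ≥ C(n,w)^m`. -/
theorem mcwc_gilbert_varshamov (m n w D : ℕ)
    (hm : 0 < m) (hw : w ≤ n) (hD : 0 < D)
    (c₀ : Fin m × Fin n → Bool)
    (hc₀ : ∀ j : Fin m, (univ.filter (fun i : Fin n => c₀ (j, i) = true)).card = w) :
    ((univ.filter (fun c : Fin m × Fin n → Bool =>
        (∀ j : Fin m, (univ.filter (fun i : Fin n => c (j, i) = true)).card = w) ∧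
        hammingDist c c₀ ≤ 2 * (D - 1))).card
      ≤ ∑ t ∈ univ.filter (fun t : Fin m → Fin D => (∑ j, (t j : ℕ)) ≤ D - 1),
          ∏ j, Nat.choose w (t j) * Nat.choose (n - w) (t j)) ∧
    Nat.choose n w ^ m ≤ Mmcwc m n (2 * D) w *
      ∑ t ∈ univ.filter (fun t : Fin m → Fin D => (∑ j, (t j : ℕ)) ≤ D - 1),
          ∏ j, Nat.choose w (t j) * Nat.choose (n - w) (t j) := by
  classical
  refine ⟨GVmcwc.ball_bound m n w D hD c₀ hc₀, ?_⟩
  have hbdd : BddAbove {k | ∃ C : Finset (Fin m × Fin n → Bool),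
    (∀ c ∈ C, ∀ j : Fin m, (univ.filter fun i : Fin n => c (j, i) = true).card = w) ∧
    (∀ u ∈ C, ∀ v ∈ C, u ≠ v → 2 * D ≤ hammingDist u v) ∧ C.card = k} := by
    refine ⟨Fintype.card (Fin m × Fin n → Bool), ?_⟩
    rintro k ⟨C, -, -, rfl⟩
    exact card_le_univ C
  have hMmem : Mmcwc m n (2 * D) w ∈ {k | ∃ C : Finset (Fin m × Fin n → Bool),
    (∀ c ∈ C, ∀ j : Fin m, (univ.filter fun i : Fin n => c (j, i) = true).card = w) ∧
    (∀ u ∈ C, ∀ v ∈ C, u ≠ v → 2 * D ≤ hammingDist u v) ∧ C.card = k} :=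
    Nat.sSup_mem ⟨0, ∅, by simp, by simp, by simp⟩ hbdd
  obtain ⟨C, hCw, hCd, hCcard⟩ := hMmem
  have hmax : ∀ C' : Finset (Fin m × Fin n → Bool),
      (∀ c ∈ C', ∀ j : Fin m, (univ.filter fun i : Fin n => c (j, i) = true).card = w) →
      (∀ u ∈ C', ∀ v ∈ C', u ≠ v → 2 * D ≤ hammingDist u v) →
      C'.card ≤ Mmcwc m n (2 * D) w :=
    fun C' h1 h2 => le_csSup hbdd ⟨C', h1, h2, rfl⟩
  -- covering claim
  have hcover : ∀ c : Fin m × Fin n → Bool,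
      (∀ j : Fin m, (univ.filter (fun i : Fin n => c (j, i) = true)).card = w) →
      ∃ u ∈ C, hammingDist c u ≤ 2 * (D - 1) := by
    intro c hcw
    by_contra h
    push_neg at h
    have hcC : c ∉ C := by
      intro hcC
      have := h c hcC
      simp [hammingDist_self] at this
    have hfar : ∀ u ∈ C, 2 * D ≤ hammingDist c u := by
      intro u hu
      have h1 := h u hu
      have heven : Even (hammingDist c u) := by
        rw [GVmcwc.hd_prod]
        apply Finset.even_sum
        intro j _
        exact GVmcwc.even_hd (w := w) (hcw j) (hCw u hu j)
      obtain ⟨k, hk⟩ := heven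
      omega
    have hle : (insert c C).card ≤ Mmcwc m n (2 * D) w := by
      apply hmax
      · intro x hx j
        rcases mem_insert.1 hx with rfl | hx
        · exact hcw j
        · exact hCw x hx j
      · intro u hu v hv huv
        rw [mem_insert] at hu hv
        rcases hu with hu | hu <;> rcases hv with hv | hv
        · exact absurd (hu.trans hv.symm) huv
        · subst hu; exact hfar v hv
        · subst hv; rw [hammingDist_comm]; exact hfar u hu
        · exact hCd u hu v hv huv
    rw [card_insert_of_notMem hcC] at hle
    omega
  -- count
  have hW : Nat.choose n w ^ m = (univ.filter fun c : Fin m × Fin n → Bool =>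
       ∀ j : Fin m, (univ.filter (fun i : Fin n => c (j, i) = true)).card = w).card :=
    (GVmcwc.total_count m n w).symm
  rw [hW]
  have hsub : (univ.filter fun c : Fin m × Fin n → Bool =>
       ∀ j : Fin m, (univ.filter (fun i : Fin n => c (j, i) = true)).card = w)
      ⊆ C.biUnion (fun u => univ.filter (fun c : Fin m × Fin n → Bool =>
        (∀ j : Fin m, (univ.filter (fun i : Fin n => c (j, i) = true)).card = w) ∧
        hammingDist c u ≤ 2 * (D - 1))) := by
    intro c hc
    rw [mem_filter] at hc
    obtain ⟨u, hu, hdu⟩ := hcover c hc.2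
    rw [mem_biUnion]
    exact ⟨u, hu, by rw [mem_filter]; exact ⟨mem_univ _, hc.2, hdu⟩⟩
  calc (univ.filter fun c : Fin m × Fin n → Bool =>
       ∀ j : Fin m, (univ.filter (fun i : Fin n => c (j, i) = true)).card = w).card
      ≤ (C.biUnion (fun u => univ.filter (fun c : Fin m × Fin n → Bool =>
        (∀ j : Fin m, (univ.filter (fun i : Fin n => c (j, i) = true)).card = w) ∧
        hammingDist c u ≤ 2 * (D - 1)))).card := card_le_card hsub
    _ ≤ ∑ u ∈ C, (univ.filter (fun c : Fin m × Fin n → Bool =>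
        (∀ j : Fin m, (univ.filter (fun i : Fin n => c (j, i) = true)).card = w) ∧
        hammingDist c u ≤ 2 * (D - 1))).card := card_biUnion_le
    _ ≤ ∑ _u ∈ C, (∑ t ∈ univ.filter (fun t : Fin m → Fin D => (∑ j, (t j : ℕ)) ≤ D - 1),
          ∏ j, Nat.choose w (t j) * Nat.choose (n - w) (t j)) := Finset.sum_le_sum (fun u hu =>
        GVmcwc.ball_bound m n w D hD u (hCw u hu))
    _ = C.card * (∑ t ∈ univ.filter (fun t : Fin m → Fin D => (∑ j, (t j : ℕ)) ≤ D - 1),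
          ∏ j, Nat.choose w (t j) * Nat.choose (n - w) (t j)) := by rw [Finset.sum_const, smul_eq_mul]
    _ = Mmcwc m n (2 * D) w * (∑ t ∈ univ.filter (fun t : Fin m → Fin D => (∑ j, (t j : ℕ)) ≤ D - 1),
          ∏ j, Nat.choose w (t j) * Nat.choose (n - w) (t j)) := by rw [hCcard]
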